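/- In ℝ², there exist exactly 6 unit vectors with pairwise inner products at most 1/2, and no 7 such vectors exist; i.e., the kissing number κ(2) = 6. -/

import Mathlib

open Matrix

def KissingConfig {n m : ℕ} (V : Matrix (Fin n) (Fin m) ℝ) : Prop :=
  (∀ i, V i ⬝ᵥ V i = 1) ∧ ∀ i j, i ≠ j → V i ⬝ᵥ V j ≤ 1/2

noncomputable def hexV : Matrix (Fin 6) (Fin 2) ℝ := fun i j =>
  match i, j with
  | 0, 0 => 1        | 0, 1 => 0
  | 1, 0 => 1/2      | 1, 1 => Real.sqrt 3 / 2
  | 2, 0 => -(1/2)   | 2, 1 => Real.sqrt 3 / 2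
  | 3, 0 => -1       | 3, 1 => 0
  | 4, 0 => -(1/2)   | 4, 1 => -(Real.sqrt 3 / 2)
  | 5, 0 => 1/2      | 5, 1 => -(Real.sqrt 3 / 2)

theorem hexV_unit : ∀ i, hexV i ⬝ᵥ hexV i = 1 := by
  intro i
  fin_cases i <;>
    simp [hexV, dotProduct, Fin.sum_univ_two] <;>
    nlinarith [Real.sq_sqrt (by norm_num : (3:ℝ) ≥ 0)]

theorem hexV_pair : ∀ i j : Fin 6, i ≠ j → hexV i ⬝ᵥ hexV j ≤ 1/2 := by
  intro i j hij
  fin_cases i <;> fin_cases j <;> simp_all [hexV, dotProduct, Fin.sum_univ_two] <;>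
    nlinarith [Real.sq_sqrt (by norm_num : (3:ℝ) ≥ 0), Real.sqrt_nonneg 3]

theorem no_seven : ¬ (∃ V : Matrix (Fin 7) (Fin 2) ℝ,
    (∀ i, V i ⬝ᵥ V i = 1) ∧ ∀ i j, i ≠ j → V i ⬝ᵥ V j ≤ 1/2) := by
  rintro ⟨V, hunit, hpair⟩
  set z : Fin 7 → ℂ := fun i => ⟨V i 0, V i 1⟩ with hz
  have hdot : ∀ i j, V i ⬝ᵥ V j = V i 0 * V j 0 + V i 1 * V j 1 := by
    intro i j; simp [dotProduct, Fin.sum_univ_two]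
  have habs : ∀ i, ‖z i‖ = 1 := by
    intro i
    have h1 : Complex.normSq (z i) = 1 := by
      have := hunit i
      rw [hdot] at this
      simpa [Complex.normSq_mk, hz] using this
    have := Complex.sq_norm (z i)
    rw [h1] at this
    nlinarith [norm_nonneg (z i)]
  have hz0 : ∀ i, z i ≠ 0 := by
    intro i h
    have := habs i
    rw [h] at this
    simpa using this
  set θ : Fin 7 → ℝ := fun i => Complex.arg (z i) with hθ
  have hcos : ∀ i, Real.cos (θ i) = V i 0 := by
    intro i
    rw [hθ]; simp only [Complex.cos_arg (hz0 i), habs i]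
    simp [hz]
  have hsin : ∀ i, Real.sin (θ i) = V i 1 := by
    intro i
    rw [hθ]; simp only [Complex.sin_arg, habs i]
    simp [hz]
  have hkey : ∀ i j, Real.cos (θ i - θ j) = V i ⬝ᵥ V j := by
    intro i j
    rw [Real.cos_sub, hcos, hcos, hsin, hsin, hdot]
  have hπ : (0:ℝ) < Real.pi := Real.pi_pos
  set f : Fin 7 → ℤ := fun i => ⌈(θ i + Real.pi) * 3 / Real.pi⌉ with hf
  have hmaps : ∀ i : Fin 7, f i ∈ Finset.Icc (1:ℤ) 6 := by
    intro i
    have h1 : -Real.pi < θ i := Complex.neg_pi_lt_arg _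
    have h2 : θ i ≤ Real.pi := Complex.arg_le_pi _
    have hlo : (0:ℝ) < (θ i + Real.pi) * 3 / Real.pi := div_pos (by nlinarith) hπ
    have hhi : (θ i + Real.pi) * 3 / Real.pi ≤ 6 := by
      rw [div_le_iff₀ hπ]; nlinarith
    simp only [Finset.mem_Icc]
    constructor
    · exact Int.ceil_pos.mpr hlo
    · exact Int.ceil_le.mpr (by exact_mod_cast hhi)
  obtain ⟨i, -, j, -, hij, hfij⟩ :=
    Finset.exists_ne_map_eq_of_card_lt_of_maps_to
      (s := (Finset.univ : Finset (Fin 7))) (t := Finset.Icc (1:ℤ) 6)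
      (by simp) (fun i _ => hmaps i)
  -- |θ i - θ j| < π/3
  have hdiff : |θ i - θ j| < Real.pi / 3 := by
    have e1 : (θ i + Real.pi) * 3 / Real.pi ≤ (f i : ℝ) := Int.le_ceil _
    have e2 : (f i : ℝ) < (θ i + Real.pi) * 3 / Real.pi + 1 := Int.ceil_lt_add_one _
    have e3 : (θ j + Real.pi) * 3 / Real.pi ≤ (f j : ℝ) := Int.le_ceil _
    have e4 : (f j : ℝ) < (θ j + Real.pi) * 3 / Real.pi + 1 := Int.ceil_lt_add_one _
    rw [hfij] at e1 e2
    have eq1 : (θ i - θ j) * 3 / Real.pi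
        = (θ i + Real.pi) * 3 / Real.pi - (θ j + Real.pi) * 3 / Real.pi := by
      field_simp; ring
    have eq2 : (θ j - θ i) * 3 / Real.pi
        = (θ j + Real.pi) * 3 / Real.pi - (θ i + Real.pi) * 3 / Real.pi := by
      field_simp; ring
    have d1 : (θ i - θ j) * 3 / Real.pi < 1 := by rw [eq1]; linarith
    have d2 : (θ j - θ i) * 3 / Real.pi < 1 := by rw [eq2]; linarith
    rw [div_lt_one hπ] at d1 d2
    rw [abs_lt]
    constructor <;> linarith
  have hcosgt : 1/2 < Real.cos (θ i - θ j) := by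
    rcases eq_or_lt_of_le (abs_nonneg (θ i - θ j)) with h0 | h0
    · rw [← Real.cos_abs, ← h0]; norm_num
    · have := Real.cos_lt_cos_of_nonneg_of_le_pi (abs_nonneg (θ i - θ j))
        (by linarith : Real.pi / 3 ≤ Real.pi) hdiff
      rw [Real.cos_pi_div_three] at this
      rw [← Real.cos_abs]; linarith
  have := hpair i j hij
  rw [← hkey] at this
  linarith

theorem stmt5 :
    (∃ V : Matrix (Fin 6) (Fin 2) ℝ, KissingConfig V) ∧
      ¬ (∃ V : Matrix (Fin 7) (Fin 2) ℝ, KissingConfig V) := by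
  refine ⟨⟨hexV, hexV_unit, hexV_pair⟩, ?_⟩
  exact no_seven
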